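/- There exists an instance with 2 men and 2 women, each with complete strict preference lists, admitting no strongly stable noncrossing matching: with preferences P_{m1} = (w2, w1), P_{m2} = (w1, w2), P_{w1} = (m2, m1), P_{w2} = (m1, m2), every noncrossing matching admits a blocking pair. -/
import Mathlib


/-- Pairs `(i,x)` and `(j,y)` cross iff `(i-j)*(x-y) < 0`. -/
def Crosses {n : ℕ} (p q : Fin n × Fin n) : Prop :=
  (((p.1 : ℕ) : ℤ) - ((q.1 : ℕ) : ℤ)) * (((p.2 : ℕ) : ℤ) - ((q.2 : ℕ) : ℤ)) < 0

/-- A matching is a set of man-woman pairs in which no man and no woman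
appears twice (a partial injection). -/
def IsMatching {n : ℕ} (M : Finset (Fin n × Fin n)) : Prop :=
  ∀ p ∈ M, ∀ q ∈ M, (p.1 = q.1 ∨ p.2 = q.2) → p = q

/-- A matching is noncrossing if no two of its pairs cross. -/
def Noncrossing {n : ℕ} (M : Finset (Fin n × Fin n)) : Prop :=
  ∀ p ∈ M, ∀ q ∈ M, ¬ Crosses p q

/-- Rank of woman `w` in man `m`'s list (lower = more preferred):
`P_{m1} = (w2, w1)`, `P_{m2} = (w1, w2)`. -/
def mRank : Fin 2 → Fin 2 → ℕ :=
  fun m w => if m = 0 then (if w = 1 then 0 else 1) else (if w = 0 then 0 else 1)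

/-- Rank of man `m` in woman `w`'s list:
`P_{w1} = (m2, m1)`, `P_{w2} = (m1, m2)`. -/
def wRank : Fin 2 → Fin 2 → ℕ :=
  fun w m => if w = 0 then (if m = 1 then 0 else 1) else (if m = 0 then 0 else 1)

/-- `(m, w)` is a blocking pair w.r.t. `M`: they are not matched together,
`m` prefers `w` to his partner (being unmatched is worst), and
`w` prefers `m` to her partner. -/
def IsBlocking (M : Finset (Fin 2 × Fin 2)) (m w : Fin 2) : Prop :=
  (m, w) ∉ M ∧
  (∀ w', (m, w') ∈ M → mRank m w < mRank m w') ∧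
  (∀ m', (m', w) ∈ M → wRank w m < wRank w m')

/-- In the 2×2 instance above, every noncrossing matching admits a blocking
pair; hence no strongly stable noncrossing matching exists. -/
theorem no_SSNM :
    ∀ M : Finset (Fin 2 × Fin 2), IsMatching M → Noncrossing M →
      ∃ m w : Fin 2, IsBlocking M m w := by
  intro M hM hN
  by_cases h01 : ((0:Fin 2), (1:Fin 2)) ∈ M
  · refine ⟨1, 0, ?_, ?_, ?_⟩
    · intro h; exact hN _ h _ h01 (by norm_num [Crosses])
    · intro w' hw'
      fin_cases w'
      · exact absurd (by norm_num [Crosses] : Crosses ((1:Fin 2),(0:Fin 2)) (0,1)) (hN _ hw' _ h01)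
      · exact absurd (hM _ hw' _ h01 (Or.inr rfl)) (by decide)
    · intro m' hm'
      fin_cases m'
      · exact absurd (hM _ hm' _ h01 (Or.inl rfl)) (by decide)
      · exact absurd (by norm_num [Crosses] : Crosses ((1:Fin 2),(0:Fin 2)) (0,1)) (hN _ hm' _ h01)
  · by_cases h10 : ((1:Fin 2), (0:Fin 2)) ∈ M
    · refine ⟨0, 1, h01, ?_, ?_⟩
      · intro w' hw'
        fin_cases w'
        · exact absurd (hM _ hw' _ h10 (Or.inr rfl)) (by decide)
        · exact absurd hw' h01
      · intro m' hm'
        fin_cases m'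
        · exact absurd hm' h01
        · exact absurd (hM _ hm' _ h10 (Or.inl rfl)) (by decide)
    · refine ⟨0, 1, h01, ?_, ?_⟩
      · intro w' hw'
        fin_cases w'
        · decide
        · exact absurd hw' h01
      · intro m' hm'
        fin_cases m'
        · exact absurd hm' h01
        · decide
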